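/- Let o, t, m be natural numbers, W' a real o×t matrix, W'' a real o×m matrix, and W := fromColumns W' W'' the o×(t⊕m) block matrix. Let L be the linear map from real o×(t⊕m) matrices to real o×t matrices sending N to its left block (the submatrix of N with column indices in the first summand Fin t). Then the image under L of the set { N | ∃ N₁ N₂, N = N₁ + N₂, the row space of N₁ is contained in the row space of W, and the column space of N₂ is contained in the column space of W } equals the set { N' | ∃ N'₁ N'₂, N' = N'₁ + N'₂, the row space of N'₁ is contained in the row space of W', and the column space of N'₂ is contained in the column space of W }. -/

import Mathlib

open Matrix

/-- The column space of a real matrix `M`, i.e. the range of `x ↦ M.mulVec x`. -/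
def colSpace {a b : Type*} [Fintype b] (M : Matrix a b ℝ) : Submodule ℝ (a → ℝ) :=
  LinearMap.range M.mulVecLin

/-- The row space of a real matrix `M`, i.e. the column space of `Mᵀ`. -/
def rowSpace {a b : Type*} [Fintype a] (M : Matrix a b ℝ) : Submodule ℝ (b → ℝ) :=
  colSpace Mᵀ

/-- The linear map taking an `o×(t⊕m)` matrix to its left `o×t` block. -/
def leftBlock (o t m : ℕ) :
    Matrix (Fin o) (Fin t ⊕ Fin m) ℝ →ₗ[ℝ] Matrix (Fin o) (Fin t) ℝ where
  toFun N := Matrix.of fun i j => N i (Sum.inl j)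
  map_add' _ _ := rfl
  map_smul' _ _ := rfl

@[simp] lemma leftBlock_apply (o t m : ℕ) (N : Matrix (Fin o) (Fin t ⊕ Fin m) ℝ) (i : Fin o)
    (j : Fin t) : leftBlock o t m N i j = N i (Sum.inl j) := rfl

/-- The image of the tangent space `ℝ^o ⊗ rowspace(W) + colspace(W) ⊗ ℝ^{t+m}` of the
determinantal variety at `W = (W' | W'')` under the projection onto the first `t`
columns equals `ℝ^o ⊗ rowspace(W') + colspace(W) ⊗ ℝ^t` (proof of Theorem 4.2). -/
theorem tangent_space_projection (o t m : ℕ)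
    (W' : Matrix (Fin o) (Fin t) ℝ) (W'' : Matrix (Fin o) (Fin m) ℝ) :
    (leftBlock o t m) ''
      { N : Matrix (Fin o) (Fin t ⊕ Fin m) ℝ |
        ∃ N₁ N₂, N = N₁ + N₂ ∧
          rowSpace N₁ ≤ rowSpace (Matrix.fromCols W' W'') ∧
          colSpace N₂ ≤ colSpace (Matrix.fromCols W' W'') } =
    { N' : Matrix (Fin o) (Fin t) ℝ |
        ∃ N'₁ N'₂, N' = N'₁ + N'₂ ∧
          rowSpace N'₁ ≤ rowSpace W' ∧
          colSpace N'₂ ≤ colSpace (Matrix.fromCols W' W'') } := by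
  ext Q
  simp only [Set.mem_image, Set.mem_setOf_eq]
  constructor
  · rintro ⟨N, ⟨N₁, N₂, rfl, h₁, h₂⟩, rfl⟩
    refine ⟨leftBlock o t m N₁, leftBlock o t m N₂, map_add _ _ _, ?_, ?_⟩
    · rintro v ⟨x, rfl⟩
      obtain ⟨y, hy⟩ := h₁ ⟨x, rfl⟩
      refine ⟨y, ?_⟩
      funext j
      have h := congrFun hy (Sum.inl j)
      simpa [rowSpace, colSpace, mulVecLin, mulVec, vecMul, dotProduct, fromCols, leftBlock_apply]
        using h
    · rintro v ⟨x, rfl⟩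
      refine h₂ ⟨Sum.elim x 0, ?_⟩
      funext i
      simp [mulVecLin, mulVec, dotProduct, leftBlock_apply, Fintype.sum_sum_type]
  · rintro ⟨N'₁, N'₂, rfl, h₁, h₂⟩
    have hrow : ∀ i, (fun j => N'₁ i j) ∈ rowSpace W' := by
      intro i
      refine h₁ ⟨Pi.single i 1, ?_⟩
      funext j
      simp [mulVecLin, mulVec, dotProduct, Pi.single_apply, mul_comm]
    choose c hc using fun i => hrow i
    set W : Matrix (Fin o) (Fin t ⊕ Fin m) ℝ := Matrix.fromCols W' W'' with hW
    refine ⟨Matrix.of (fun i j => Wᵀ.mulVec (c i) j) + Matrix.fromCols N'₂ 0,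
      ⟨Matrix.of (fun i j => Wᵀ.mulVec (c i) j), Matrix.fromCols N'₂ 0, rfl, ?_, ?_⟩, ?_⟩
    · rintro v ⟨x, rfl⟩
      refine ⟨fun k => ∑ i, x i * c i k, ?_⟩
      funext j
      simp only [mulVecLin_apply, mulVec, dotProduct, transpose_apply, of_apply,
        Finset.mul_sum, Finset.sum_mul]
      rw [Finset.sum_comm]
      exact Finset.sum_congr rfl fun i _ => Finset.sum_congr rfl fun k _ => by ring
    · rintro v ⟨x, rfl⟩
      refine h₂ ⟨fun j => x (Sum.inl j), ?_⟩
      funext i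
      simp [mulVecLin, mulVec, dotProduct, fromCols, Fintype.sum_sum_type]
    · funext i j
      have h := congrFun (hc i) j
      simp only [mulVecLin_apply] at h
      simp only [leftBlock_apply, of_apply, Matrix.add_apply,
        fromCols_apply_inl, hW]
      rw [show (fromCols W' W'')ᵀ.mulVec (c i) (Sum.inl j) = W'ᵀ.mulVec (c i) j by
        simp [mulVec, dotProduct, fromCols]]
      rw [h]
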